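/- Assume 2δ ≥ σ². Then ∫_0^1 (1/ω(λ)) exp{ −∫_λ^1 φ(z)/ω(z) dz } dλ = ∞ if and only if ∫_0^1 (1/z) exp{ −∫_z^1 ( ∫_{(0,∞)} (1 − e^{−us}) μ(ds) ) / ω(u) du } dz = ∞. -/

import Mathlib

open MeasureTheory Set

lemma stmt9_aux (f g : ℝ → ℝ) (s : Set ℝ) (K : ℝ) (hK : 0 ≤ K) (hs : MeasurableSet s)
    (h : ∀ x ∈ s, f x ≤ K * g x)
    (hf : ∫⁻ x in s, ENNReal.ofReal (f x) = ⊤) :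
    ∫⁻ x in s, ENNReal.ofReal (g x) = ⊤ := by
  by_contra hg
  have hle : ∫⁻ x in s, ENNReal.ofReal (f x)
      ≤ ENNReal.ofReal K * ∫⁻ x in s, ENNReal.ofReal (g x) := by
    rw [← lintegral_const_mul' _ _ ENNReal.ofReal_ne_top]
    refine lintegral_mono_ae ?_
    filter_upwards [ae_restrict_mem hs] with x hx
    calc ENNReal.ofReal (f x) ≤ ENNReal.ofReal (K * g x) :=
          ENNReal.ofReal_le_ofReal (h x hx)
      _ = ENNReal.ofReal K * ENNReal.ofReal (g x) := ENNReal.ofReal_mul hK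
  rw [hf] at hle
  exact (ENNReal.mul_lt_top ENNReal.ofReal_lt_top (lt_top_iff_ne_top.2 hg)).ne
    (top_le_iff.1 hle)

/-- Assume 2δ ≥ σ². Then ∫_0^1 (1/ω(λ)) exp{−∫_λ^1 φ(z)/ω(z) dz} dλ = ∞ iff
∫_0^1 (1/z) exp{−∫_z^1 (∫ (1−e^{−us}) μ(ds))/ω(u) du} dz = ∞. -/
theorem stmt_9
    (μ : Measure ℝ) (δ c σ : ℝ)
    (hμ0 : μ (Iic 0) = 0)
    (hμint : ∫⁻ u in Ioi (0:ℝ), ENNReal.ofReal (min 1 u) ∂μ < ⊤)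
    (hδ : 0 ≤ δ) (hc : 0 < c) (hσ : 0 < σ)
    (h2δ : σ ^ 2 ≤ 2 * δ)
    (φ ω : ℝ → ℝ)
    (hφ : ∀ z, φ z = δ * z + ∫ u in Ioi (0:ℝ), (1 - Real.exp (-(z * u))) ∂μ)
    (hω : ∀ z, ω z = c * z + σ ^ 2 * z ^ 2 / 2) :
    (∫⁻ lam in Ioc (0:ℝ) 1,
        ENNReal.ofReal ((1 / ω lam) * Real.exp (-(∫ z in lam..(1:ℝ), φ z / ω z)))) = ⊤ ↔
    (∫⁻ z in Ioc (0:ℝ) 1,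
        ENNReal.ofReal ((1 / z) * Real.exp
          (-(∫ u in z..(1:ℝ),
              (∫ s in Ioi (0:ℝ), (1 - Real.exp (-(u * s))) ∂μ) / ω u)))) = ⊤ := by
  set ψ : ℝ → ℝ := fun z => ∫ s in Ioi (0:ℝ), (1 - Real.exp (-(z * s))) ∂μ with hψdef
  set M : ℝ := (∫⁻ u in Ioi (0:ℝ), ENNReal.ofReal (min 1 u) ∂μ).toReal with hMdef
  have hωfac : ∀ z : ℝ, ω z = z * (c + σ ^ 2 * z / 2) := by
    intro z; rw [hω]; ring
  have hωpos : ∀ z : ℝ, 0 < z → 0 < ω z := by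
    intro z hz; rw [hωfac]; positivity
  -- pointwise bounds on the integrand of ψ
  have hpt : ∀ z : ℝ, 0 ≤ z → ∀ s : ℝ, 0 < s →
      0 ≤ 1 - Real.exp (-(z * s)) ∧ 1 - Real.exp (-(z * s)) ≤ max 1 z * min 1 s := by
    intro z hz s hs
    have hzs : 0 ≤ z * s := mul_nonneg hz hs.le
    have h1 : Real.exp (-(z * s)) ≤ 1 := Real.exp_le_one_iff.2 (by linarith)
    have h2 : 1 - Real.exp (-(z * s)) ≤ z * s := by
      have := Real.add_one_le_exp (-(z * s))
      have hee : 0 < Real.exp (-(z*s)) := Real.exp_pos _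
      nlinarith [Real.add_one_le_exp (z * s), Real.exp_pos (z*s),
        mul_pos (Real.exp_pos (z*s)) hee]
    constructor
    · linarith
    · rcases le_total s 1 with hs1 | hs1
      · have : min 1 s = s := min_eq_right hs1
        rw [this]
        calc 1 - Real.exp (-(z * s)) ≤ z * s := h2
          _ ≤ max 1 z * s := by
              exact mul_le_mul_of_nonneg_right (le_max_right 1 z) hs.le
      · have : min 1 s = 1 := min_eq_left hs1
        rw [this, mul_one]
        calc 1 - Real.exp (-(z * s)) ≤ 1 := by linarith [Real.exp_pos (-(z*s))]
          _ ≤ max 1 z := le_max_left 1 z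
  -- integrability of the ψ-integrand
  have hint : ∀ z : ℝ, 0 ≤ z →
      Integrable (fun s => 1 - Real.exp (-(z * s))) (μ.restrict (Ioi 0)) := by
    intro z hz
    constructor
    · exact (Continuous.aestronglyMeasurable (by continuity))
    · rw [hasFiniteIntegral_def]
      have hle : ∫⁻ s, (‖1 - Real.exp (-(z * s))‖₊ : ENNReal) ∂μ.restrict (Ioi 0)
          ≤ ∫⁻ s, ENNReal.ofReal (max 1 z) * ENNReal.ofReal (min 1 s)
              ∂μ.restrict (Ioi 0) := by
        refine lintegral_mono_ae ?_
        filter_upwards [ae_restrict_mem measurableSet_Ioi] with s hs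
        rcases hpt z hz s hs with ⟨h0, hb⟩
        rw [← enorm_eq_nnnorm, Real.enorm_eq_ofReal h0, ← ENNReal.ofReal_mul (by positivity)]
        exact ENNReal.ofReal_le_ofReal hb
      rw [lintegral_const_mul' _ _ ENNReal.ofReal_ne_top] at hle
      exact lt_of_le_of_lt hle (ENNReal.mul_lt_top ENNReal.ofReal_lt_top hμint)
  -- nonnegativity of ψ
  have hψ0 : ∀ z : ℝ, 0 ≤ z → 0 ≤ ψ z := by
    intro z hz
    refine setIntegral_nonneg measurableSet_Ioi fun s hs => (hpt z hz s hs).1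
  -- ψ is bounded by M on [0,1]
  have hmin_int : Integrable (fun s => min 1 s) (μ.restrict (Ioi 0)) := by
    constructor
    · exact (Continuous.aestronglyMeasurable (continuous_const.min continuous_id))
    · rw [hasFiniteIntegral_def]
      have hle : ∫⁻ s, (‖min 1 s‖₊ : ENNReal) ∂μ.restrict (Ioi 0)
          ≤ ∫⁻ s, ENNReal.ofReal (min 1 s) ∂μ.restrict (Ioi 0) := by
        refine lintegral_mono_ae ?_
        filter_upwards [ae_restrict_mem measurableSet_Ioi] with s hs
        rw [← enorm_eq_nnnorm, Real.enorm_eq_ofReal (le_min one_pos.le (le_of_lt hs))]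
      exact lt_of_le_of_lt hle hμint
  have hψM : ∀ z ∈ Icc (0:ℝ) 1, ψ z ≤ M := by
    intro z hz
    have h1 : ψ z ≤ ∫ s in Ioi (0:ℝ), min 1 s ∂μ := by
      refine setIntegral_mono_on (hint z hz.1) hmin_int measurableSet_Ioi ?_
      intro s hs
      rcases hpt z hz.1 s hs with ⟨h0, hb⟩
      have : max 1 z = 1 := max_eq_left hz.2
      rw [this, one_mul] at hb; exact hb
    have h2 : ∫ s in Ioi (0:ℝ), min 1 s ∂μ = M := by
      rw [hMdef, integral_eq_lintegral_of_nonneg_ae]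
      · filter_upwards [ae_restrict_mem measurableSet_Ioi] with s hs
        exact le_min one_pos.le (le_of_lt hs)
      · exact hmin_int.1
    linarith [h1, h2.le, h2.ge]
  -- monotonicity of ψ on [0, ∞)
  have hψmono : MonotoneOn ψ (Ici (0:ℝ)) := by
    intro a ha b hb hab
    refine setIntegral_mono_on (hint a ha) (hint b hb) measurableSet_Ioi ?_
    intro s hs
    have : Real.exp (-(b * s)) ≤ Real.exp (-(a * s)) := by
      apply Real.exp_le_exp.2
      have := mul_le_mul_of_nonneg_right hab (le_of_lt hs)
      linarith
    linarith
  -- measurability of ψ on positive reals via monotone extension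
  have hΨmeas : Measurable (fun z => ψ (max z 0)) := by
    refine Monotone.measurable ?_
    intro a b hab
    exact hψmono (le_max_right a 0) (le_max_right b 0)
      (max_le_max hab le_rfl)
  have hωmeas : Measurable ω := by
    have : ω = fun z => c * z + σ ^ 2 * z ^ 2 / 2 := funext hω
    rw [this]; fun_prop
  -- interval integrability of ψ/ω on [lam, 1] for lam ∈ (0,1]
  have hBint : ∀ lam : ℝ, 0 < lam → lam ≤ 1 →
      IntervalIntegrable (fun z => ψ z / ω z) volume lam 1 := by
    intro lam hlam hlam1
    rw [intervalIntegrable_iff_integrableOn_Ioc_of_le hlam1]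
    refine ⟨?_, ?_⟩
    · have hmeas : AEStronglyMeasurable (fun z => ψ (max z 0) / ω z)
          (volume.restrict (Ioc lam 1)) :=
        ((hΨmeas.div hωmeas).aestronglyMeasurable).restrict
      refine hmeas.congr ?_
      filter_upwards [ae_restrict_mem measurableSet_Ioc] with z hz
      rw [max_eq_left (le_of_lt (hlam.trans hz.1))]
    · apply HasFiniteIntegral.restrict_of_bounded (C := M / (ω lam))
        measure_Ioc_lt_top
      filter_upwards [ae_restrict_mem measurableSet_Ioc] with z hz
      have hz0 : 0 < z := hlam.trans hz.1
      have hωz : 0 < ω z := hωpos z hz0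
      have hωlam : 0 < ω lam := hωpos lam hlam
      have hψz : 0 ≤ ψ z := hψ0 z hz0.le
      have hωle : ω lam ≤ ω z := by
        rw [hωfac, hωfac]
        have h1 : lam ≤ z := hz.1.le
        nlinarith [mul_nonneg (sub_nonneg.2 h1) hc.le,
          mul_nonneg (sq_nonneg σ)
            (mul_nonneg (sub_nonneg.2 h1) (add_nonneg hlam.le hz0.le))]
      rw [Real.norm_eq_abs, abs_div, abs_of_nonneg hψz, abs_of_pos hωz]
      rw [div_le_div_iff₀ hωz hωlam]
      have hψzM : ψ z ≤ M := hψM z ⟨hz0.le, hz.2⟩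
      have hM0 : 0 ≤ M := le_trans hψz hψzM
      nlinarith
  -- interval integrability of g := δ z / ω z, and bounds on its integral
  have hωcont : Continuous ω := by
    have : ω = fun z => c * z + σ ^ 2 * z ^ 2 / 2 := funext hω
    rw [this]; fun_prop
  have hGint : ∀ lam : ℝ, 0 < lam → lam ≤ 1 →
      IntervalIntegrable (fun z => δ * z / ω z) volume lam 1 := by
    intro lam hlam hlam1
    apply ContinuousOn.intervalIntegrable
    apply ContinuousOn.div (by fun_prop) hωcont.continuousOn
    intro z hz
    rw [uIcc_of_le hlam1] at hz
    exact (hωpos z (lt_of_lt_of_le hlam hz.1)).ne'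
  have hGbnd : ∀ lam : ℝ, 0 < lam → lam ≤ 1 →
      0 ≤ (∫ z in lam..(1:ℝ), δ * z / ω z) ∧
        (∫ z in lam..(1:ℝ), δ * z / ω z) ≤ δ / c := by
    intro lam hlam hlam1
    constructor
    · apply intervalIntegral.integral_nonneg hlam1
      intro z hz
      have hz0 : 0 < z := lt_of_lt_of_le hlam hz.1
      exact div_nonneg (mul_nonneg hδ hz0.le) (hωpos z hz0).le
    · have hle : ∀ z ∈ Icc lam 1, δ * z / ω z ≤ δ / c := by
        intro z hz
        have hz0 : 0 < z := lt_of_lt_of_le hlam hz.1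
        rw [hωfac, div_le_div_iff₀ (by positivity) hc]
        nlinarith [mul_nonneg (mul_nonneg hδ (sq_nonneg σ)) (mul_nonneg hz0.le hz0.le)]
      calc (∫ z in lam..(1:ℝ), δ * z / ω z) ≤ ∫ _z in lam..(1:ℝ), δ / c :=
            intervalIntegral.integral_mono_on hlam1 (hGint lam hlam hlam1)
              intervalIntegrable_const hle
        _ = (1 - lam) * (δ / c) := by
            rw [intervalIntegral.integral_const]; simp [smul_eq_mul]
        _ ≤ δ / c := by nlinarith [div_nonneg hδ hc.le]
  have hsplit : ∀ lam : ℝ, 0 < lam → lam ≤ 1 →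
      (∫ z in lam..(1:ℝ), φ z / ω z)
        = (∫ z in lam..(1:ℝ), δ * z / ω z) + ∫ z in lam..(1:ℝ), ψ z / ω z := by
    intro lam hlam hlam1
    rw [← intervalIntegral.integral_add (hGint lam hlam hlam1) (hBint lam hlam hlam1)]
    apply intervalIntegral.integral_congr
    intro z _
    show φ z / ω z = δ * z / ω z + ψ z / ω z
    rw [hφ z, add_div]
  constructor
  · intro h
    refine stmt9_aux _ _ _ (1 / c) (by positivity) measurableSet_Ioc ?_ h
    intro lam hlam
    have hlam0 : 0 < lam := hlam.1
    have hlam1 : lam ≤ 1 := hlam.2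
    have hωl : 0 < ω lam := hωpos lam hlam0
    rcases hGbnd lam hlam0 hlam1 with ⟨hG0, hGc⟩
    have h1 : 1 / ω lam ≤ 1 / (c * lam) := by
      apply one_div_le_one_div_of_le (by positivity)
      rw [hωfac]
      nlinarith [mul_nonneg (sq_nonneg σ) (mul_nonneg hlam0.le hlam0.le)]
    have h2 : Real.exp (-(∫ z in lam..(1:ℝ), φ z / ω z))
        ≤ Real.exp (-(∫ z in lam..(1:ℝ), ψ z / ω z)) := by
      apply Real.exp_le_exp.2
      rw [hsplit lam hlam0 hlam1]
      linarith
    calc (1 / ω lam) * Real.exp (-(∫ z in lam..(1:ℝ), φ z / ω z))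
        ≤ (1 / (c * lam)) * Real.exp (-(∫ z in lam..(1:ℝ), ψ z / ω z)) :=
          mul_le_mul h1 h2 (Real.exp_nonneg _) (by positivity)
      _ = (1 / c) * ((1 / lam) * Real.exp (-(∫ z in lam..(1:ℝ), ψ z / ω z))) := by
          ring
  · intro h
    refine stmt9_aux _ _ _ ((c + σ ^ 2 / 2) * Real.exp (δ / c)) (by positivity)
      measurableSet_Ioc ?_ h
    intro lam hlam
    have hlam0 : 0 < lam := hlam.1
    have hlam1 : lam ≤ 1 := hlam.2
    have hωl : 0 < ω lam := hωpos lam hlam0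
    rcases hGbnd lam hlam0 hlam1 with ⟨hG0, hGc⟩
    have h1 : 1 / lam ≤ (c + σ ^ 2 / 2) * (1 / ω lam) := by
      rw [mul_one_div, div_le_div_iff₀ hlam0 hωl, hωfac]
      nlinarith [mul_nonneg (mul_nonneg (sq_nonneg σ) hlam0.le) (sub_nonneg.2 hlam1)]
    have h2 : Real.exp (-(∫ z in lam..(1:ℝ), ψ z / ω z))
        ≤ Real.exp (δ / c) * Real.exp (-(∫ z in lam..(1:ℝ), φ z / ω z)) := by
      rw [← Real.exp_add]
      apply Real.exp_le_exp.2
      rw [hsplit lam hlam0 hlam1]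
      linarith
    calc (1 / lam) * Real.exp (-(∫ z in lam..(1:ℝ), ψ z / ω z))
        ≤ ((c + σ ^ 2 / 2) * (1 / ω lam)) *
            (Real.exp (δ / c) * Real.exp (-(∫ z in lam..(1:ℝ), φ z / ω z))) :=
          mul_le_mul h1 h2 (Real.exp_nonneg _) (by positivity)
      _ = ((c + σ ^ 2 / 2) * Real.exp (δ / c)) *
            ((1 / ω lam) * Real.exp (-(∫ z in lam..(1:ℝ), φ z / ω z))) := by ring
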